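/- Fix an integer n ≥ 1 and let S₀ := {(v, w) ∈ ℝ^{n+1} × ℝ^{n+1} : v ≠ 0, w ≠ 0, vᵗQw = 0}, equipped with the (ℝˣ × ℝˣ)-action (t, s)·(v, w) := (t v, s w) (scalar multiplication by invertible para-complex numbers). Then the assignment (v, w) ↦ (ℝ·v, {x ∈ ℝ^{n+1} : xᵗQw = 0}) descends to a well-defined bijection from the quotient S₀/(ℝˣ × ℝˣ) onto the set of full flags (ℓ, H) in ℝ^{n+1}, i.e. pairs consisting of a 1-dimensional linear subspace ℓ and an n-dimensional linear subspace H with ℓ ⊆ H. This is the model of the boundary at infinity ∂∞ℍ_τ^n of the para-complex hyperbolic space as the flag manifold. -/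

import Mathlib

open Matrix

/-- The `n × n` real antidiagonal matrix with all antidiagonal entries equal to `1`. -/
noncomputable def Qmat (n : ℕ) : Matrix (Fin n) (Fin n) ℝ :=
  Matrix.of fun i j => if (i : ℕ) + (j : ℕ) + 1 = n then (1 : ℝ) else 0

/-- The linear functional `x ↦ x ⬝ᵥ c` on `ℝᵐ`. -/
noncomputable def dotFun {m : ℕ} (c : Fin m → ℝ) : (Fin m → ℝ) →ₗ[ℝ] ℝ where
  toFun x := x ⬝ᵥ c
  map_add' x y := by simp [add_dotProduct]
  map_smul' r x := by simp [smul_dotProduct]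

lemma mulVec_Qmat (n : ℕ) (w : Fin (n+1) → ℝ) :
    (Qmat (n+1)).mulVec w = fun i => w i.rev := by
  funext i
  simp only [Matrix.mulVec, dotProduct, Qmat, Matrix.of_apply]
  rw [Finset.sum_eq_single i.rev]
  · have h : (i : ℕ) + (i.rev : ℕ) + 1 = n + 1 := by
      have := i.is_lt; simp only [Fin.val_rev]; omega
    rw [if_pos h, one_mul]
  · intro j _ hj
    have h : ¬ ((i : ℕ) + (j : ℕ) + 1 = n + 1) := by
      intro h
      apply hj
      apply Fin.ext
      have := j.is_lt; simp only [Fin.val_rev]; omega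
    rw [if_neg h, zero_mul]
  · simp

lemma dotFun_apply {m : ℕ} (c x : Fin m → ℝ) : dotFun c x = x ⬝ᵥ c := rfl

-- every functional is dotFun of some vector
lemma exists_dotFun {m : ℕ} (φ : (Fin m → ℝ) →ₗ[ℝ] ℝ) : ∃ c, φ = dotFun c := by
  refine ⟨fun i => φ (Pi.single i 1), ?_⟩
  apply LinearMap.ext
  intro x
  rw [dotFun_apply]
  have hx : x = ∑ i, x i • (Pi.single i 1 : Fin m → ℝ) := by
    funext j; simp [Pi.single_apply, Finset.sum_ite_eq']
  conv_lhs => rw [hx]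
  simp [dotProduct, mul_comm]

lemma single_dot {m : ℕ} (i : Fin m) (c : Fin m → ℝ) : (Pi.single i (1:ℝ)) ⬝ᵥ c = c i := by
  simp [dotProduct, Pi.single_apply, Finset.sum_ite_eq']

lemma dot_self_ne_zero {m : ℕ} {c : Fin m → ℝ} (hc : c ≠ 0) : c ⬝ᵥ c ≠ 0 := by
  intro h
  exact hc ((dotProduct_self_eq_zero).mp h)

lemma ker_dotFun_smul {m : ℕ} (s : ℝˣ) (c : Fin m → ℝ) :
    LinearMap.ker (dotFun ((s:ℝ) • c)) = LinearMap.ker (dotFun c) := by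
  ext x
  simp only [LinearMap.mem_ker, dotFun_apply, dotProduct_smul, smul_eq_mul,
    mul_eq_zero]
  exact ⟨fun h => h.resolve_left s.ne_zero, Or.inr⟩

lemma finrank_ker_dotFun {m : ℕ} {c : Fin (m+1) → ℝ} (hc : c ≠ 0) :
    Module.finrank ℝ (LinearMap.ker (dotFun c)) = m := by
  have hcc := dot_self_ne_zero hc
  have hsurj : Function.Surjective (dotFun c) := by
    intro r
    refine ⟨(r / (c ⬝ᵥ c)) • c, ?_⟩
    rw [dotFun_apply, smul_dotProduct, smul_eq_mul, div_mul_cancel₀ _ hcc]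
  have h := LinearMap.finrank_range_add_finrank_ker (dotFun c)
  rw [LinearMap.range_eq_top.2 hsurj, finrank_top] at h
  simp only [Module.finrank_self, Module.finrank_pi, Fintype.card_fin] at h
  omega

lemma ker_dotFun_inj {m : ℕ} {c c' : Fin m → ℝ} (hc : c ≠ 0) (hc' : c' ≠ 0)
    (h : LinearMap.ker (dotFun c) = LinearMap.ker (dotFun c')) :
    ∃ s : ℝˣ, c' = (s:ℝ) • c := by
  have hcc := dot_self_ne_zero hc
  set u : Fin m → ℝ := (c ⬝ᵥ c)⁻¹ • c with hu_def
  have hu : u ⬝ᵥ c = 1 := by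
    rw [hu_def, smul_dotProduct, smul_eq_mul, inv_mul_cancel₀ hcc]
  set s := u ⬝ᵥ c' with hs_def
  have key : ∀ x, x ⬝ᵥ c' = s * (x ⬝ᵥ c) := by
    intro x
    have hker : x - (x ⬝ᵥ c) • u ∈ LinearMap.ker (dotFun c) := by
      simp only [LinearMap.mem_ker, dotFun_apply, sub_dotProduct,
        smul_dotProduct, smul_eq_mul, hu, mul_one, sub_self]
    rw [h] at hker
    simp only [LinearMap.mem_ker, dotFun_apply, sub_dotProduct,
      smul_dotProduct, smul_eq_mul, sub_eq_zero] at hker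
    rw [hker, ← hs_def]; ring
  have hs : s ≠ 0 := by
    intro h0
    apply hc'
    funext i
    have := key (Pi.single i 1)
    rw [single_dot, h0, zero_mul] at this
    simpa using this
  refine ⟨Units.mk0 s hs, ?_⟩
  funext i
  have := key (Pi.single i 1)
  rw [single_dot, single_dot] at this
  simpa using this

lemma mulVec_Qmat_ne_zero {n : ℕ} {w : Fin (n+1) → ℝ} (hw : w ≠ 0) :
    (Qmat (n+1)).mulVec w ≠ 0 := by
  intro h
  apply hw
  funext j
  have := congrFun h j.rev
  simpa [mulVec_Qmat, Fin.rev_rev] using this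


/-- The flag manifold model of the boundary at infinity `∂∞ℍ_τⁿ` of the para-complex
hyperbolic space: the map `(v, w) ↦ (ℝ·v, {x : xᵗQw = 0})` descends to a well-defined
bijection from the quotient of `S₀ = {(v,w) : v ≠ 0, w ≠ 0, vᵗQw = 0}` by the
`(ℝˣ × ℝˣ)`-action `(t,s)·(v,w) = (tv, sw)` onto the set of full flags `(ℓ, H)`
(a line contained in a hyperplane) in `ℝ^{n+1}`. -/
theorem boundary_flag_model (n : ℕ) (hn : 1 ≤ n) :
    letI S₀ : Set ((Fin (n + 1) → ℝ) × (Fin (n + 1) → ℝ)) :=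
      {p | p.1 ≠ 0 ∧ p.2 ≠ 0 ∧ p.1 ⬝ᵥ (Qmat (n + 1)).mulVec p.2 = 0}
    letI F : ((Fin (n + 1) → ℝ) × (Fin (n + 1) → ℝ)) →
        Submodule ℝ (Fin (n + 1) → ℝ) × Submodule ℝ (Fin (n + 1) → ℝ) :=
      fun p => (Submodule.span ℝ {p.1}, LinearMap.ker (dotFun ((Qmat (n + 1)).mulVec p.2)))
    -- `F` maps `S₀` into the set of full flags
    (∀ p ∈ S₀, Module.finrank ℝ ↥(F p).1 = 1 ∧ Module.finrank ℝ ↥(F p).2 = n ∧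
      (F p).1 ≤ (F p).2) ∧
    -- `F` is invariant under the action and injective on the quotient
    (∀ p ∈ S₀, ∀ p' ∈ S₀,
      (F p = F p' ↔ ∃ t s : ℝˣ, p' = ((t : ℝ) • p.1, (s : ℝ) • p.2))) ∧
    -- `F` is surjective onto the set of full flags
    (∀ ℓ H : Submodule ℝ (Fin (n + 1) → ℝ),
      Module.finrank ℝ ↥ℓ = 1 → Module.finrank ℝ ↥H = n → ℓ ≤ H →
      ∃ p ∈ S₀, F p = (ℓ, H)) := by
  refine ⟨?_, ?_, ?_⟩
  · -- maps into flags
    rintro ⟨v, w⟩ ⟨hv, hw, hq⟩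
    refine ⟨finrank_span_singleton hv, finrank_ker_dotFun (mulVec_Qmat_ne_zero hw), ?_⟩
    rw [Submodule.span_le, Set.singleton_subset_iff]
    exact hq
  · -- injectivity / invariance
    rintro ⟨v, w⟩ ⟨hv, hw, hq⟩ ⟨v', w'⟩ ⟨hv', hw', hq'⟩
    constructor
    · intro h
      rw [Prod.ext_iff] at h
      obtain ⟨h1, h2⟩ := h
      obtain ⟨t, ht⟩ := Submodule.span_singleton_eq_span_singleton.mp h1
      obtain ⟨s, hs⟩ := ker_dotFun_inj (mulVec_Qmat_ne_zero hw) (mulVec_Qmat_ne_zero hw') h2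
      refine ⟨t, s, ?_⟩
      have hws : w' = (s:ℝ) • w := by
        funext j
        have := congrFun hs j.rev
        simpa [mulVec_Qmat, Fin.rev_rev] using this
      simp only [Prod.mk.injEq]
      exact ⟨ht.symm, hws⟩
    · rintro ⟨t, s, hp⟩
      rw [Prod.ext_iff] at hp
      obtain ⟨h1, h2⟩ := hp
      simp only at h1 h2
      subst h1; subst h2
      simp only [Prod.mk.injEq]
      constructor
      · exact Submodule.span_singleton_eq_span_singleton.mpr ⟨t, rfl⟩
      · rw [Matrix.mulVec_smul, ker_dotFun_smul]
  · -- surjectivity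
    intro ℓ H hℓ hH hle
    obtain ⟨⟨v, hvℓ⟩, hv0⟩ := Module.finrank_pos_iff_exists_ne_zero.mp
      (by rw [hℓ]; norm_num : 0 < Module.finrank ℝ ℓ)
    have hv : v ≠ 0 := by
      intro h; apply hv0; exact Subtype.ext h
    have hspan : Submodule.span ℝ {v} = ℓ := by
      apply Submodule.eq_of_le_of_finrank_eq
      · rwa [Submodule.span_le, Set.singleton_subset_iff]
      · rw [finrank_span_singleton hv, hℓ]
    -- build a functional with kernel H
    have hquot : Module.finrank ℝ ((Fin (n+1) → ℝ) ⧸ H) = Module.finrank ℝ ℝ := by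
      have h := Submodule.finrank_quotient_add_finrank H
      simp only [Module.finrank_pi, Fintype.card_fin, hH] at h
      simp only [Module.finrank_self]
      omega
    let e : ((Fin (n+1) → ℝ) ⧸ H) ≃ₗ[ℝ] ℝ := LinearEquiv.ofFinrankEq _ _ hquot
    let φ : (Fin (n+1) → ℝ) →ₗ[ℝ] ℝ := (e : ((Fin (n+1) → ℝ) ⧸ H) →ₗ[ℝ] ℝ).comp H.mkQ
    have hkerφ : LinearMap.ker φ = H := by
      rw [show φ = (e : ((Fin (n+1) → ℝ) ⧸ H) →ₗ[ℝ] ℝ).comp H.mkQ from rfl,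
        LinearEquiv.ker_comp, Submodule.ker_mkQ]
    obtain ⟨c, hc⟩ := exists_dotFun φ
    have hc0 : c ≠ 0 := by
      intro h0
      have hHtop : H = ⊤ := by
        rw [← hkerφ, hc, h0]
        ext x
        simp [LinearMap.mem_ker, dotFun_apply]
      rw [hHtop] at hH
      rw [finrank_top] at hH
      simp only [Module.finrank_pi, Fintype.card_fin] at hH
      omega
    refine ⟨(v, fun i => c i.rev), ⟨hv, ?_, ?_⟩, ?_⟩
    · intro h0
      apply hc0
      funext j
      have := congrFun h0 j.rev
      simpa [Fin.rev_rev] using this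
    · have hQ : (Qmat (n+1)).mulVec (fun i => c i.rev) = c := by
        rw [mulVec_Qmat]; funext i; simp [Fin.rev_rev]
      rw [hQ]
      have : v ∈ LinearMap.ker φ := hkerφ.symm ▸ hle hvℓ
      rw [hc] at this
      exact this
    · have hQ : (Qmat (n+1)).mulVec (fun i => c i.rev) = c := by
        rw [mulVec_Qmat]; funext i; simp [Fin.rev_rev]
      simp only [Prod.mk.injEq]
      refine ⟨hspan, ?_⟩
      rw [hQ, ← hc, hkerφ]
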